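/- Suppose the null p-values are superuniform and the p-value vector p is PRDS on the subset H0, and the filter F is monotonic. Then the Focused BH procedure at level q controls the generalized false discovery rate: FDR_F = E[FDP(U*)] ≤ q. -/

import Mathlib

open MeasureTheory Finset

/-- Total prioritization weight of a prioritization vector. -/
noncomputable def normU {m : ℕ} (U : Fin m → ℝ) : ℝ := ∑ j, U j

/-- Threshold rejection set `R(t,p) = {j : p_j ≤ t}`. -/
noncomputable def Rset {m : ℕ} (t : ℝ) (p : Fin m → ℝ) : Finset (Fin m) :=
  Finset.univ.filter (fun j => p j ≤ t)

/-- Focused BH FDP estimate `m·t / ‖F(R(t,p),p)‖` (with `x/0 = 0`). -/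
noncomputable def FDPhat {m : ℕ} (F : Finset (Fin m) → (Fin m → ℝ) → (Fin m → ℝ))
    (p : Fin m → ℝ) (t : ℝ) : ℝ :=
  (m : ℝ) * t / normU (F (Rset t p) p)

/-- The Focused BH threshold: the largest `t ∈ {0, p_1, ..., p_m}` with `FDPhat(t) ≤ q`. -/
noncomputable def tstar {m : ℕ} (F : Finset (Fin m) → (Fin m → ℝ) → (Fin m → ℝ))
    (q : ℝ) (p : Fin m → ℝ) : ℝ :=
  sSup {t : ℝ | (t = 0 ∨ ∃ j, t = p j) ∧ FDPhat F p t ≤ q}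

/-- Generalized FDP of a prioritization vector (with `0/0 = 0`). -/
noncomputable def genFDP {m : ℕ} (H0 : Finset (Fin m)) (U : Fin m → ℝ) : ℝ :=
  (∑ j ∈ H0, U j) / (∑ j, U j)

/-- A filter outputs prioritization scores in `[0,1]`, vanishing outside the rejection set. -/
def IsFilter {m : ℕ} (F : Finset (Fin m) → (Fin m → ℝ) → (Fin m → ℝ)) : Prop :=
  ∀ (R : Finset (Fin m)) (x : Fin m → ℝ) (j : Fin m),
    (j ∉ R → F R x j = 0) ∧ F R x j ∈ Set.Icc (0 : ℝ) 1

/-- Null p-values are superuniform. -/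
def Superuniform {Ω : Type*} [MeasurableSpace Ω] (μ : Measure Ω) {m : ℕ}
    (p : Ω → Fin m → ℝ) (H0 : Finset (Fin m)) : Prop :=
  ∀ j ∈ H0, ∀ t ∈ Set.Icc (0 : ℝ) 1, μ {ω | p ω j ≤ t} ≤ ENNReal.ofReal t

/-- A filter is monotonic: decreasing the p-values and enlarging the rejection set can only
increase the total prioritization weight. -/
def MonotonicFilter {m : ℕ} (F : Finset (Fin m) → (Fin m → ℝ) → (Fin m → ℝ)) : Prop :=
  ∀ (p1 p2 : Fin m → ℝ), (∀ i, p1 i ≤ p2 i) →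
    ∀ (R1 R2 : Finset (Fin m)), R2 ⊆ R1 →
      normU (F R2 p2) ≤ normU (F R1 p1)

/-- The p-value vector is PRDS on the subset `H0`. -/
def PRDSOn {Ω : Type*} [MeasurableSpace Ω] (μ : Measure Ω) {m : ℕ}
    (p : Ω → Fin m → ℝ) (H0 : Finset (Fin m)) : Prop :=
  ∀ j ∈ H0, ∀ D : Set (Fin m → ℝ), MeasurableSet D →
    (∀ x ∈ D, ∀ y : Fin m → ℝ, (∀ i, x i ≤ y i) → y ∈ D) →
    ∀ t1 t2 : ℝ, t1 ≤ t2 → 0 < μ {ω | p ω j ≤ t1} →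
      μ ({ω | p ω ∈ D} ∩ {ω | p ω j ≤ t1}) / μ {ω | p ω j ≤ t1} ≤
        μ ({ω | p ω ∈ D} ∩ {ω | p ω j ≤ t2}) / μ {ω | p ω j ≤ t2}

namespace FBH

variable {m : ℕ}

/-- `‖F(R(t,x),x)‖` as a function of the threshold. -/
noncomputable def nw (F : Finset (Fin m) → (Fin m → ℝ) → (Fin m → ℝ))
    (x : Fin m → ℝ) (t : ℝ) : ℝ := normU (F (Rset t x) x)

/-- The feasible set for the continuous threshold. -/
def sbarSet (F : Finset (Fin m) → (Fin m → ℝ) → (Fin m → ℝ)) (q : ℝ)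
    (x : Fin m → ℝ) : Set ℝ :=
  {t : ℝ | t ∈ Set.Icc (0:ℝ) 1 ∧ (m:ℝ) * t ≤ q * nw F x t}

/-- The continuous Focused-BH threshold. -/
noncomputable def sbar (F : Finset (Fin m) → (Fin m → ℝ) → (Fin m → ℝ)) (q : ℝ)
    (x : Fin m → ℝ) : ℝ := sSup (sbarSet F q x)

section Basic

variable {F : Finset (Fin m) → (Fin m → ℝ) → (Fin m → ℝ)} {q : ℝ} {x : Fin m → ℝ}

lemma normU_F_nonneg (hF : IsFilter F) (R : Finset (Fin m)) (x : Fin m → ℝ) :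
    0 ≤ normU (F R x) :=
  Finset.sum_nonneg fun j _ => (hF R x j).2.1

lemma normU_F_le (hF : IsFilter F) (R : Finset (Fin m)) (x : Fin m → ℝ) :
    normU (F R x) ≤ m := by
  calc normU (F R x) ≤ ∑ _j : Fin m, (1:ℝ) := Finset.sum_le_sum fun j _ => (hF R x j).2.2
  _ = m := by simp

lemma Rset_mono {t t' : ℝ} (h : t ≤ t') : Rset t x ⊆ Rset t' x := by
  intro j hj
  simp only [Rset, Finset.mem_filter, Finset.mem_univ, true_and] at *
  exact hj.trans h

lemma Rset_anti {x y : Fin m → ℝ} (h : ∀ i, x i ≤ y i) (t : ℝ) :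
    Rset t y ⊆ Rset t x := by
  intro j hj
  simp only [Rset, Finset.mem_filter, Finset.mem_univ, true_and] at *
  exact (h j).trans hj

lemma nw_mono (hmono : MonotonicFilter F) {t t' : ℝ} (h : t ≤ t') :
    nw F x t ≤ nw F x t' :=
  hmono x x (fun _ => le_rfl) _ _ (Rset_mono h)

lemma nw_anti (hmono : MonotonicFilter F) {x y : Fin m → ℝ} (h : ∀ i, x i ≤ y i) (t : ℝ) :
    nw F y t ≤ nw F x t :=
  hmono x y h _ _ (Rset_anti h t)

lemma zero_mem_sbarSet (hF : IsFilter F) (hq : 0 ≤ q) : (0:ℝ) ∈ sbarSet F q x := by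
  refine ⟨⟨le_rfl, zero_le_one⟩, ?_⟩
  simpa [nw] using mul_nonneg hq (normU_F_nonneg hF _ x)

lemma sbarSet_bddAbove : BddAbove (sbarSet F q x) :=
  ⟨1, fun t ht => ht.1.2⟩

lemma sbar_nonneg (hF : IsFilter F) (hq : 0 ≤ q) : 0 ≤ sbar F q x :=
  le_csSup sbarSet_bddAbove (zero_mem_sbarSet hF hq)

lemma sbar_le_one (hF : IsFilter F) (hq : 0 ≤ q) : sbar F q x ≤ 1 :=
  csSup_le ⟨0, zero_mem_sbarSet hF hq⟩ fun t ht => ht.1.2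

lemma sbar_mem (hF : IsFilter F) (hmono : MonotonicFilter F) (hq : 0 ≤ q) :
    sbar F q x ∈ sbarSet F q x := by
  refine ⟨⟨sbar_nonneg hF hq, sbar_le_one hF hq⟩, ?_⟩
  rcases Nat.eq_zero_or_pos m with hm | hm
  · have : ((m:ℕ) : ℝ) = 0 := by exact_mod_cast congrArg Nat.cast hm
    rw [this, zero_mul]
    exact mul_nonneg hq (normU_F_nonneg hF _ x)
  · have hm' : (0:ℝ) < m := by exact_mod_cast hm
    rw [mul_comm, ← le_div_iff₀ hm']
    refine csSup_le ⟨0, zero_mem_sbarSet hF hq⟩ fun t ht => ?_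
    have h1 : t ≤ sbar F q x := le_csSup sbarSet_bddAbove ht
    have h2 : (m:ℝ) * t ≤ q * nw F x (sbar F q x) :=
      ht.2.trans (mul_le_mul_of_nonneg_left (nw_mono hmono h1) hq)
    rw [le_div_iff₀ hm']
    linarith


lemma sbar_le_q (hF : IsFilter F) (hmono : MonotonicFilter F) (hm : 0 < m)
    (hq0 : 0 < q) : sbar F q x ≤ q := by
  have hm' : (0:ℝ) < m := by exact_mod_cast hm
  have h1 := (sbar_mem hF hmono hq0.le (x := x)).2
  have h2 : nw F x (sbar F q x) ≤ m := normU_F_le hF _ x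
  have : (m:ℝ) * sbar F q x ≤ q * m := h1.trans (mul_le_mul_of_nonneg_left h2 hq0.le)
  nlinarith

lemma sbar_anti (hF : IsFilter F) (hmono : MonotonicFilter F) (hq : 0 ≤ q)
    {x y : Fin m → ℝ} (h : ∀ i, x i ≤ y i) : sbar F q y ≤ sbar F q x := by
  refine csSup_le ⟨0, zero_mem_sbarSet hF hq⟩ fun t ht => le_csSup sbarSet_bddAbove ?_
  exact ⟨ht.1, ht.2.trans (mul_le_mul_of_nonneg_left (nw_anti hmono h t) hq)⟩

end Basic

section Tstar

variable {F : Finset (Fin m) → (Fin m → ℝ) → (Fin m → ℝ)} {q : ℝ} {x : Fin m → ℝ}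

def tstarSet (F : Finset (Fin m) → (Fin m → ℝ) → (Fin m → ℝ)) (q : ℝ)
    (x : Fin m → ℝ) : Set ℝ :=
  {t : ℝ | (t = 0 ∨ ∃ j, t = x j) ∧ FDPhat F x t ≤ q}

lemma tstarSet_finite : (tstarSet F q x).Finite := by
  apply Set.Finite.subset (Set.Finite.insert 0 (Set.finite_range x))
  intro t ht
  rcases ht.1 with h | ⟨j, hj⟩
  · exact Or.inl h
  · exact Or.inr ⟨j, hj.symm⟩

lemma zero_mem_tstarSet (hq : 0 ≤ q) : (0:ℝ) ∈ tstarSet F q x := by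
  refine ⟨Or.inl rfl, ?_⟩
  simp only [FDPhat, mul_zero, zero_div]
  exact hq

lemma le_tstar {t : ℝ} (ht : t ∈ tstarSet F q x) : t ≤ tstar F q x :=
  le_csSup (tstarSet_finite.bddAbove) ht

lemma tstar_mem (hq : 0 ≤ q) : tstar F q x ∈ tstarSet F q x :=
  Set.Nonempty.csSup_mem ⟨0, zero_mem_tstarSet hq⟩ tstarSet_finite

lemma tstar_nonneg (hq : 0 ≤ q) : 0 ≤ tstar F q x :=
  le_tstar (zero_mem_tstarSet hq)

end Tstar

section Meas

variable {F : Finset (Fin m) → (Fin m → ℝ) → (Fin m → ℝ)} {q : ℝ}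

lemma measurable_selector (τ : (Fin m → ℝ) → ℝ) (hτ : Measurable τ)
    (G : Finset (Fin m) → (Fin m → ℝ) → ℝ) (hG : ∀ R, Measurable (G R)) :
    Measurable (fun x => G (Rset (τ x) x) x) := by
  have hmsR : ∀ R : Finset (Fin m), MeasurableSet {y : Fin m → ℝ | Rset (τ y) y = R} := by
    intro R
    have hrepr : {y : Fin m → ℝ | Rset (τ y) y = R}
        = ⋂ i, {y : Fin m → ℝ | y i ≤ τ y ↔ i ∈ R} := by
      ext y
      simp only [Set.mem_setOf_eq, Set.mem_iInter, Finset.ext_iff, Rset, Finset.mem_filter,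
        Finset.mem_univ, true_and]
    rw [hrepr]
    refine MeasurableSet.iInter fun i => ?_
    by_cases hi : i ∈ R
    · simp only [hi, iff_true]
      exact measurableSet_le (measurable_pi_apply i) hτ
    · simp only [hi, iff_false]
      exact (measurableSet_le (measurable_pi_apply i) hτ).compl
  have hrepr : (fun x => G (Rset (τ x) x) x) = fun x =>
      ∑ R : Finset (Fin m), Set.indicator {y | Rset (τ y) y = R} (G R) x := by
    funext x
    rw [Finset.sum_eq_single (Rset (τ x) x)]
    · exact (Set.indicator_of_mem (by simp) _).symm
    · intro R _ hR
      exact Set.indicator_of_notMem (fun h => hR (Set.mem_setOf_eq ▸ h).symm) _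
    · intro h
      exact absurd (Finset.mem_univ _) h
  rw [hrepr]
  exact Finset.measurable_sum _ fun R _ => (hG R).indicator (hmsR R)

lemma measurable_normU_F
    (hFmeas : ∀ (R : Finset (Fin m)) (j : Fin m), Measurable (fun x : Fin m → ℝ => F R x j))
    (R : Finset (Fin m)) : Measurable (fun x : Fin m → ℝ => normU (F R x)) := by
  unfold normU
  exact Finset.measurable_sum _ fun j _ => hFmeas R j

lemma measurable_nw
    (hFmeas : ∀ (R : Finset (Fin m)) (j : Fin m), Measurable (fun x : Fin m → ℝ => F R x j))
    (τ : (Fin m → ℝ) → ℝ) (hτ : Measurable τ) :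
    Measurable (fun x => nw F x (τ x)) :=
  measurable_selector τ hτ _ (measurable_normU_F hFmeas)

lemma sbar_ge_iff (hF : IsFilter F) (hmono : MonotonicFilter F) (hq : 0 ≤ q)
    {x : Fin m → ℝ} {u : ℝ} (hu : 0 < u) (hu1 : u ≤ 1) :
    u ≤ sbar F q x ↔ ((m:ℝ) * u ≤ q * nw F x u ∨
      ∃ j, u < x j ∧ x j ≤ 1 ∧ (m:ℝ) * (x j) ≤ q * nw F x (x j)) := by
  constructor
  · intro h
    set t := sbar F q x with ht
    have htmem := sbar_mem hF hmono hq (x := x)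
    set C : Finset ℝ := insert u ((Finset.image x Finset.univ).filter
      (fun v => u < v ∧ v ≤ t)) with hC
    have hCne : C.Nonempty := ⟨u, Finset.mem_insert_self _ _⟩
    set c := C.max' hCne with hc
    have hcC : c ∈ C := C.max'_mem hCne
    have huc : u ≤ c := C.le_max' u (Finset.mem_insert_self _ _)
    have hct : c ≤ t := by
      refine Finset.max'_le _ _ _ fun v hv => ?_
      rcases Finset.mem_insert.1 hv with rfl | hv
      · exact h
      · exact (Finset.mem_filter.1 hv).2.2
    have hRc : Rset t x = Rset c x := by
      ext i
      simp only [Rset, Finset.mem_filter, Finset.mem_univ, true_and]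
      constructor
      · intro hit
        by_cases hiu : x i ≤ u
        · exact hiu.trans huc
        · refine C.le_max' _ (Finset.mem_insert_of_mem ?_)
          refine Finset.mem_filter.2 ⟨Finset.mem_image.2 ⟨i, Finset.mem_univ i, rfl⟩,
            lt_of_not_ge hiu, hit⟩
      · intro hic
        exact hic.trans hct
    have hnwc : nw F x c = nw F x t := by
      unfold nw
      rw [hRc]
    have hfeasc : (m:ℝ) * c ≤ q * nw F x c := by
      rw [hnwc]
      calc (m:ℝ) * c ≤ (m:ℝ) * t := by
            exact mul_le_mul_of_nonneg_left hct (by positivity)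
      _ ≤ q * nw F x t := htmem.2
    rcases Finset.mem_insert.1 hcC with hcu | hcmem
    · rw [hcu] at hfeasc
      exact Or.inl hfeasc
    · obtain ⟨hcim, hcu, hcle⟩ := Finset.mem_filter.1 hcmem
      obtain ⟨i, _, hxi⟩ := Finset.mem_image.1 hcim
      refine Or.inr ⟨i, ?_, ?_, ?_⟩
      · rw [hxi]; exact hcu
      · rw [hxi]; exact hcle.trans (sbar_le_one hF hq)
      · rw [hxi]; exact hxi ▸ hfeasc
  · rintro (h | ⟨i, hui, hi1, hfeas⟩)
    · exact le_csSup sbarSet_bddAbove ⟨⟨hu.le, hu1⟩, h⟩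
    · exact le_trans hui.le
        (le_csSup sbarSet_bddAbove ⟨⟨(hu.trans hui).le, hi1⟩, hfeas⟩)

lemma measurable_sbar (hF : IsFilter F) (hmono : MonotonicFilter F) (hq : 0 ≤ q)
    (hFmeas : ∀ (R : Finset (Fin m)) (j : Fin m), Measurable (fun x : Fin m → ℝ => F R x j)) :
    Measurable (sbar F q (m := m)) := by
  refine measurable_of_Ici fun u => ?_
  rcases le_or_gt u 0 with hu | hu
  · have : sbar F q (m := m) ⁻¹' Set.Ici u = Set.univ := by
      ext x
      simpa using hu.trans (sbar_nonneg hF hq)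
    rw [this]; exact MeasurableSet.univ
  rcases le_or_gt u 1 with hu1 | hu1
  · have : sbar F q (m := m) ⁻¹' Set.Ici u =
        {x : Fin m → ℝ | (m:ℝ) * u ≤ q * nw F x u} ∪
          ⋃ j, ({x : Fin m → ℝ | u < x j} ∩ {x | x j ≤ 1} ∩
            {x | (m:ℝ) * (x j) ≤ q * nw F x (x j)}) := by
      ext x
      simp only [Set.mem_preimage, Set.mem_Ici, Set.mem_union, Set.mem_iUnion, Set.mem_inter_iff,
        Set.mem_setOf_eq]
      rw [sbar_ge_iff hF hmono hq hu hu1]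
      tauto
    rw [this]
    refine MeasurableSet.union
      (measurableSet_le measurable_const ((measurable_nw hFmeas _ measurable_const).const_mul q))
      (MeasurableSet.iUnion fun j => ?_)
    refine MeasurableSet.inter (MeasurableSet.inter ?_ ?_) ?_
    · exact measurableSet_lt measurable_const (measurable_pi_apply j)
    · exact measurableSet_le (measurable_pi_apply j) measurable_const
    · exact measurableSet_le ((measurable_pi_apply j).const_mul _)
        ((measurable_nw hFmeas _ (measurable_pi_apply j)).const_mul q)
  · have : sbar F q (m := m) ⁻¹' Set.Ici u = ∅ := by
      ext x
      simp only [Set.mem_preimage, Set.mem_Ici, Set.mem_empty_iff_false, iff_false, not_le]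
      exact lt_of_le_of_lt (sbar_le_one hF hq) hu1
    rw [this]; exact MeasurableSet.empty

lemma measurable_tstar (hq : 0 ≤ q)
    (hFmeas : ∀ (R : Finset (Fin m)) (j : Fin m), Measurable (fun x : Fin m → ℝ => F R x j)) :
    Measurable (tstar F q (m := m)) := by
  have hFD : ∀ j : Fin m, Measurable (fun x : Fin m → ℝ => FDPhat F x (x j)) := by
    intro j
    show Measurable fun x : Fin m → ℝ => ((m:ℝ) * x j) / nw F x (x j)
    exact ((measurable_pi_apply j).const_mul _).div
      (measurable_nw hFmeas _ (measurable_pi_apply j))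
  refine measurable_of_Ici fun u => ?_
  rcases le_or_gt u 0 with hu | hu
  · have : tstar F q (m := m) ⁻¹' Set.Ici u = Set.univ := by
      ext x
      simpa using hu.trans (tstar_nonneg hq)
    rw [this]; exact MeasurableSet.univ
  · have : tstar F q (m := m) ⁻¹' Set.Ici u =
        ⋃ j, ({x : Fin m → ℝ | u ≤ x j} ∩ {x | FDPhat F x (x j) ≤ q}) := by
      ext x
      simp only [Set.mem_preimage, Set.mem_Ici, Set.mem_iUnion, Set.mem_inter_iff,
        Set.mem_setOf_eq]
      constructor
      · intro h
        have hmem := tstar_mem (F := F) (q := q) (x := x) hq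
        rcases hmem.1 with h0 | ⟨j, hj⟩
        · exfalso
          rw [h0] at h
          exact absurd h (not_le.2 hu)
        · exact ⟨j, hj ▸ h, by rw [← hj]; exact hmem.2⟩
      · rintro ⟨j, huj, hfd⟩
        exact huj.trans (le_tstar ⟨Or.inr ⟨j, rfl⟩, hfd⟩)
    rw [this]
    exact MeasurableSet.iUnion fun j =>
      (measurableSet_le measurable_const (measurable_pi_apply j)).inter
        (measurableSet_le (hFD j) measurable_const)

end Meas

section Pointwise

variable {F : Finset (Fin m) → (Fin m → ℝ) → (Fin m → ℝ)} {q : ℝ}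

lemma pointwise_bound (hF : IsFilter F) (hmono : MonotonicFilter F) (hm : 0 < m)
    (hq : 0 < q) (H0 : Finset (Fin m)) (x : Fin m → ℝ)
    (hx : ∀ i, x i ∈ Set.Icc (0:ℝ) 1) (hnull : ∀ j ∈ H0, 0 < x j) :
    genFDP H0 (F (Rset (tstar F q x) x) x) ≤
      (q / m) * ∑ j ∈ H0,
        (if x j ≤ sbar F q x ∧ 0 < sbar F q x then (sbar F q x)⁻¹ else 0) := by
  classical
  set s := sbar F q x with hsdef
  set t := tstar F q x with htdef
  have hm' : (0:ℝ) < m := by exact_mod_cast hm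
  have hDnn : 0 ≤ normU (F (Rset t x) x) := normU_F_nonneg hF _ x
  have hRHSnn : 0 ≤ (q / m) * ∑ j ∈ H0, (if x j ≤ s ∧ 0 < s then s⁻¹ else 0) := by
    refine mul_nonneg (by positivity) (Finset.sum_nonneg fun j _ => ?_)
    split
    · next h => exact inv_nonneg.2 h.2.le
    · exact le_rfl
  rcases eq_or_lt_of_le hDnn with hD0 | hDpos
  · have hzero : (∑ j, F (Rset t x) x j) = 0 := hD0.symm
    rw [genFDP, hzero, div_zero]
    exact hRHSnn
  · have htmem := tstar_mem (F := F) (q := q) (x := x) hq.le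
    have hfd : FDPhat F x t ≤ q := htmem.2
    have hmt : (m:ℝ) * t ≤ q * normU (F (Rset t x) x) := (div_le_iff₀ hDpos).1 hfd
    have ht0 : 0 ≤ t := tstar_nonneg hq.le
    have ht1 : t ≤ 1 := by
      rcases htmem.1 with h0 | ⟨i, hi⟩
      · rw [htdef, h0]; exact zero_le_one
      · rw [htdef, hi]; exact (hx i).2
    have htS : t ∈ sbarSet F q x := ⟨⟨ht0, ht1⟩, hmt⟩
    have hts : t ≤ s := le_csSup sbarSet_bddAbove htS
    rcases le_or_gt s 0 with hs0 | hspos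
    · have ht00 : t = 0 := le_antisymm (hts.trans hs0) ht0
      have hnum : ∑ j ∈ H0, F (Rset t x) x j = 0 := by
        refine Finset.sum_eq_zero fun j hj => ?_
        refine (hF _ x j).1 ?_
        simp only [Rset, Finset.mem_filter, Finset.mem_univ, true_and, ht00]
        exact not_le.2 (hnull j hj)
      rw [genFDP, hnum, zero_div]
      exact hRHSnn
    · have hsmem := sbar_mem hF hmono hq.le (x := x)
      have hsfeas : (m:ℝ) * s ≤ q * nw F x s := hsmem.2
      have hnws_pos : 0 < nw F x s := by
        rcases eq_or_lt_of_le (normU_F_nonneg hF (Rset s x) x) with h0 | hpos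
        · exfalso
          have : nw F x s = 0 := h0.symm
          rw [this, mul_zero] at hsfeas
          nlinarith
        · exact hpos
      set C : Finset ℝ := insert (0:ℝ)
        ((Finset.image x Finset.univ).filter (fun v => v ≤ s)) with hCdef
      have hCne : C.Nonempty := ⟨0, Finset.mem_insert_self _ _⟩
      set c := C.max' hCne with hcdef
      have hcmem : c ∈ C := C.max'_mem hCne
      have hcs : c ≤ s := by
        refine Finset.max'_le _ _ _ fun v hv => ?_
        rcases Finset.mem_insert.1 hv with rfl | hv
        · exact hspos.le
        · exact (Finset.mem_filter.1 hv).2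
      have hup : ∀ i, x i ≤ s → x i ≤ c := fun i hi =>
        C.le_max' _ (Finset.mem_insert_of_mem (Finset.mem_filter.2
          ⟨Finset.mem_image.2 ⟨i, Finset.mem_univ i, rfl⟩, hi⟩))
      have hRcs : Rset c x = Rset s x := by
        ext i
        simp only [Rset, Finset.mem_filter, Finset.mem_univ, true_and]
        exact ⟨fun h => h.trans hcs, fun h => hup i h⟩
      have hnwcs : nw F x c = nw F x s := by
        unfold nw
        rw [hRcs]
      have hcS : c ∈ tstarSet F q x := by
        refine ⟨?_, ?_⟩
        · rcases Finset.mem_insert.1 hcmem with h0 | hcm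
          · exact Or.inl h0
          · obtain ⟨i, _, hxi⟩ := Finset.mem_image.1 (Finset.mem_filter.1 hcm).1
            exact Or.inr ⟨i, hxi.symm⟩
        · show (m:ℝ) * c / normU (F (Rset c x) x) ≤ q
          have hnwc_pos : 0 < normU (F (Rset c x) x) := by
            show 0 < nw F x c
            rw [hnwcs]; exact hnws_pos
          rw [div_le_iff₀ hnwc_pos]
          show (m:ℝ) * c ≤ q * nw F x c
          rw [hnwcs]
          calc (m:ℝ) * c ≤ (m:ℝ) * s := mul_le_mul_of_nonneg_left hcs (by positivity)
          _ ≤ q * nw F x s := hsfeas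
      have hct : c ≤ t := le_tstar hcS
      have hRts : Rset t x = Rset s x := by
        refine Finset.Subset.antisymm (Rset_mono hts) ?_
        rw [← hRcs]
        exact Rset_mono hct
      have hDs : normU (F (Rset t x) x) = nw F x s := by
        show nw F x t = nw F x s
        unfold nw
        rw [hRts]
      have hDge : (m:ℝ) * s / q ≤ normU (F (Rset t x) x) := by
        rw [hDs, div_le_iff₀ hq, mul_comm (nw F x s) q]
        exact hsfeas
      have hN1nn : (0:ℝ) ≤ ∑ j ∈ H0, (if x j ≤ s then (1:ℝ) else 0) := by
        refine Finset.sum_nonneg fun j _ => ?_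
        split <;> norm_num
      have hnum_le : ∑ j ∈ H0, F (Rset t x) x j
          ≤ ∑ j ∈ H0, (if x j ≤ s then (1:ℝ) else 0) := by
        refine Finset.sum_le_sum fun j hj => ?_
        by_cases hjs : x j ≤ s
        · simp only [hjs, if_true]
          exact (hF _ x j).2.2
        · simp only [hjs, if_false]
          refine le_of_eq ((hF _ x j).1 ?_)
          rw [hRts]
          simp only [Rset, Finset.mem_filter, Finset.mem_univ, true_and]
          exact hjs
      have hkey : genFDP H0 (F (Rset t x) x)
          ≤ (∑ j ∈ H0, (if x j ≤ s then (1:ℝ) else 0)) / ((m:ℝ) * s / q) := by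
        rw [genFDP]
        exact div_le_div₀ hN1nn hnum_le (by positivity) hDge
      refine hkey.trans (le_of_eq ?_)
      have hsum : ∑ j ∈ H0, (if x j ≤ s ∧ 0 < s then s⁻¹ else 0)
          = (∑ j ∈ H0, (if x j ≤ s then (1:ℝ) else 0)) * s⁻¹ := by
        rw [Finset.sum_mul]
        refine Finset.sum_congr rfl fun j _ => ?_
        by_cases hjs : x j ≤ s <;> simp [hjs, hspos]
      rw [hsum]
      have hsne : s ≠ 0 := ne_of_gt hspos
      have hqne : q ≠ 0 := ne_of_gt hq
      have hmne : ((m:ℕ):ℝ) ≠ 0 := ne_of_gt hm'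
      field_simp

end Pointwise

section Key

lemma key_lemma {Ω : Type*} [MeasurableSpace Ω] (μ : Measure Ω) [IsProbabilityMeasure μ]
    {m : ℕ} (H0 : Finset (Fin m)) (p : Ω → Fin m → ℝ) (hpmeas : Measurable p)
    (hsuper : Superuniform μ p H0) (hPRDS : PRDSOn μ p H0)
    (F : Finset (Fin m) → (Fin m → ℝ) → (Fin m → ℝ))
    (hF : IsFilter F)
    (hFmeas : ∀ (R : Finset (Fin m)) (j : Fin m), Measurable (fun x : Fin m → ℝ => F R x j))
    (hmono : MonotonicFilter F) (hm : 0 < m)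
    (q : ℝ) (hq : q ∈ Set.Ioo (0 : ℝ) 1) (j : Fin m) (hj : j ∈ H0) :
    ∫⁻ ω, ENNReal.ofReal
        (if p ω j ≤ sbar F q (p ω) ∧ 0 < sbar F q (p ω) then (sbar F q (p ω))⁻¹ else 0) ∂μ
      ≤ 1 := by
  classical
  have hgmeas : Measurable (sbar F q (m := m)) := measurable_sbar hF hmono hq.1.le hFmeas
  have hgq : ∀ x : Fin m → ℝ, sbar F q x ≤ q := fun x => sbar_le_q hF hmono hm hq.1
  set I := ∫⁻ ω, ENNReal.ofReal
      (if p ω j ≤ sbar F q (p ω) ∧ 0 < sbar F q (p ω) then (sbar F q (p ω))⁻¹ else 0) ∂μ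
    with hIdef
  suffices h : ∀ r : ℝ, 0 < r → r < 1 → I ≤ (ENNReal.ofReal r)⁻¹ by
    by_contra hcon
    push_neg at hcon
    have hIne0 : I ≠ 0 := by
      intro h0
      rw [h0] at hcon
      exact absurd hcon (by simp)
    have hinv_ne_top : I⁻¹ ≠ ⊤ := ENNReal.inv_ne_top.2 hIne0
    have hinv_lt_one : I⁻¹ < 1 := ENNReal.inv_lt_one.2 hcon
    have htr_lt : (I⁻¹).toReal < 1 := by
      have := (ENNReal.toReal_lt_toReal hinv_ne_top (by simp)).2 hinv_lt_one
      simpa using this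
    have htr_nn : (0:ℝ) ≤ (I⁻¹).toReal := ENNReal.toReal_nonneg
    set r : ℝ := (1 + (I⁻¹).toReal) / 2 with hrdef
    have hr0 : 0 < r := by rw [hrdef]; linarith
    have hr1 : r < 1 := by rw [hrdef]; linarith
    have hlt : I⁻¹ < ENNReal.ofReal r := by
      rw [← ENNReal.ofReal_toReal hinv_ne_top]
      exact (ENNReal.ofReal_lt_ofReal_iff hr0).2 (by rw [hrdef]; linarith)
    have hfin : (ENNReal.ofReal r)⁻¹ < I := by
      have := ENNReal.inv_lt_inv.2 hlt
      rwa [inv_inv] at this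
    exact absurd (h r hr0 hr1) (not_le.2 hfin)
  intro r hr0 hr1
  set t : ℕ → ℝ := fun k => q * r ^ k with htdef
  have htpos : ∀ k, 0 < t k := fun k => mul_pos hq.1 (pow_pos hr0 k)
  have htleq : ∀ k, t k ≤ q := by
    intro k
    rw [htdef]
    calc q * r ^ k ≤ q * 1 := mul_le_mul_of_nonneg_left
          (pow_le_one₀ hr0.le hr1.le) hq.1.le
    _ = q := mul_one q
  have htle1 : ∀ k, t k ≤ 1 := fun k => (htleq k).trans hq.2.le
  have htsucc : ∀ k, t (k+1) = r * t k := by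
    intro k
    rw [htdef]
    ring
  have htmono : ∀ k, t (k+1) ≤ t k := by
    intro k
    rw [htsucc k]
    nlinarith [htpos k]
  set P : ℕ → Set Ω := fun k => {ω | p ω j ≤ t k} with hPdef
  set Gs : ℕ → Set Ω := fun k => {ω | sbar F q (p ω) ≤ t k} with hGdef
  have hPmeas : ∀ k, MeasurableSet (P k) := fun k =>
    measurableSet_le ((measurable_pi_apply j).comp hpmeas) measurable_const
  have hGmeas : ∀ k, MeasurableSet (Gs k) := fun k =>
    measurableSet_le (hgmeas.comp hpmeas) measurable_const
  have hGsub : ∀ k, Gs (k+1) ⊆ Gs k := fun k ω hω => le_trans hω (htmono k)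
  set E : ℕ → Set Ω := fun k => (Gs k ∩ P k) \ (Gs (k+1) ∩ P k) with hEdef
  have hEmeas : ∀ k, MeasurableSet (E k) := fun k =>
    ((hGmeas k).inter (hPmeas k)).diff ((hGmeas (k+1)).inter (hPmeas k))
  set a : ℕ → ENNReal := fun k => μ (P k) with hadef
  set A : ℕ → ENNReal := fun k => μ (Gs k ∩ P k) with hAdef
  set Dk : ℕ → ENNReal := fun k => μ (Gs (k+1) ∩ P k) with hDkdef
  set c : ℕ → ENNReal := fun k => A k / a k with hcdef
  have hAa : ∀ k, A k ≤ a k := fun k => measure_mono Set.inter_subset_right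
  have hDkle : ∀ k, Dk k ≤ A k := fun k =>
    measure_mono (Set.inter_subset_inter (hGsub k) subset_rfl)
  have hμE : ∀ k, μ (E k) = A k - Dk k := fun k =>
    measure_diff (Set.inter_subset_inter (hGsub k) subset_rfl)
      ((hGmeas (k+1)).inter (hPmeas k)).nullMeasurableSet (measure_ne_top μ _)
  have hsuperk : ∀ k, a k ≤ ENNReal.ofReal (t k) := fun k =>
    hsuper j hj (t k) ⟨(htpos k).le, htle1 k⟩
  have hcsucc : ∀ k, c (k+1) ≤ Dk k / a k := by
    intro k
    rcases eq_or_ne (a (k+1)) 0 with ha | ha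
    · have hA0 : A (k+1) = 0 := le_antisymm (ha ▸ hAa (k+1)) zero_le
      rw [hcdef]
      simp only [hA0, ENNReal.zero_div]
      exact zero_le
    · have hpos : 0 < a (k+1) := pos_iff_ne_zero.2 ha
      exact hPRDS j hj {x : Fin m → ℝ | sbar F q x ≤ t (k+1)}
        (measurableSet_le hgmeas measurable_const)
        (fun x hx y hxy => le_trans (sbar_anti hF hmono hq.1.le hxy) hx)
        (t (k+1)) (t k) (htmono k) hpos
  have hc_dec : ∀ k, c (k+1) ≤ c k := fun k =>
    (hcsucc k).trans (ENNReal.div_le_div_right (hDkle k) _)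
  have hterm : ∀ k, (ENNReal.ofReal (t (k+1)))⁻¹ * μ (E k)
      ≤ (ENNReal.ofReal r)⁻¹ * (c k - c (k+1)) := by
    intro k
    have hsplit : (ENNReal.ofReal (t (k+1)))⁻¹
        = (ENNReal.ofReal r)⁻¹ * (ENNReal.ofReal (t k))⁻¹ := by
      rw [htsucc k, ENNReal.ofReal_mul hr0.le,
        ENNReal.mul_inv (Or.inl (by simp [ENNReal.ofReal_eq_zero]; exact hr0))
          (Or.inl ENNReal.ofReal_ne_top)]
    rw [hsplit, hμE k, mul_assoc]
    refine mul_le_mul_right ?_ _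
    calc (ENNReal.ofReal (t k))⁻¹ * (A k - Dk k)
        ≤ (a k)⁻¹ * (A k - Dk k) :=
          mul_le_mul_left (ENNReal.inv_le_inv.2 (hsuperk k)) _
    _ ≤ c k - c (k+1) := by
        rcases eq_or_ne (a k) 0 with ha | ha
        · have hA0 : A k = 0 := le_antisymm (ha ▸ hAa k) zero_le
          have hD0 : Dk k = 0 := le_antisymm (hA0 ▸ hDkle k) zero_le
          rw [hA0, hD0]
          simp
        · have hainv : (a k)⁻¹ ≠ ⊤ := ENNReal.inv_ne_top.2 ha
          rw [mul_comm, ENNReal.sub_mul fun _ _ => hainv, ← div_eq_mul_inv, ← div_eq_mul_inv]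
          exact tsub_le_tsub_left (hcsucc k) _
  have hantiC : Antitone c := antitone_nat_of_succ_le hc_dec
  have hpartial : ∀ n, ∑ k ∈ Finset.range n, (c k - c (k+1)) ≤ c 0 - c n := by
    intro n
    induction n with
    | zero => simp
    | succ n ih =>
      rw [Finset.sum_range_succ]
      calc ∑ k ∈ Finset.range n, (c k - c (k+1)) + (c n - c (n+1))
          ≤ (c 0 - c n) + (c n - c (n+1)) := add_le_add_left ih _
      _ = c 0 - c (n+1) := tsub_add_tsub_cancel (hantiC (Nat.zero_le n)) (hc_dec n)
  have hc0 : c 0 ≤ 1 := by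
    rcases eq_or_ne (a 0) 0 with ha | ha
    · have hA0 : A 0 = 0 := le_antisymm (ha ▸ hAa 0) zero_le
      rw [hcdef]
      simp only [hA0, ENNReal.zero_div]
      exact zero_le_one
    · exact (ENNReal.div_le_div_right (hAa 0) _).trans ENNReal.div_self_le_one
  have htel : ∑' k, (c k - c (k+1)) ≤ 1 :=
    Summable.tsum_le_of_sum_range_le ENNReal.summable fun n =>
      (hpartial n).trans (tsub_le_self.trans hc0)
  have hpt : ∀ ω, ENNReal.ofReal
      (if p ω j ≤ sbar F q (p ω) ∧ 0 < sbar F q (p ω) then (sbar F q (p ω))⁻¹ else 0)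
      ≤ ∑' k, Set.indicator (E k) (fun _ => (ENNReal.ofReal (t (k+1)))⁻¹) ω := by
    intro ω
    by_cases hcond : p ω j ≤ sbar F q (p ω) ∧ 0 < sbar F q (p ω)
    · obtain ⟨hpj, hgpos⟩ := hcond
      rw [if_pos ⟨hpj, hgpos⟩]
      have hex : ∃ n, t n < sbar F q (p ω) := by
        obtain ⟨n, hn⟩ := exists_pow_lt_of_lt_one (div_pos hgpos hq.1) hr1
        refine ⟨n, ?_⟩
        have := mul_lt_mul_of_pos_left hn hq.1
        rwa [mul_div_cancel₀ _ (ne_of_gt hq.1)] at this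
      set n₀ := Nat.find hex with hn₀def
      have hn₀spec : t n₀ < sbar F q (p ω) := Nat.find_spec hex
      have hn₀pos : n₀ ≠ 0 := by
        intro h0
        rw [h0] at hn₀spec
        have h1 : sbar F q (p ω) ≤ q := hgq _
        have h2 : t 0 = q := by rw [htdef]; simp
        rw [h2] at hn₀spec
        linarith
      obtain ⟨k, hk⟩ := Nat.exists_eq_succ_of_ne_zero hn₀pos
      have hgk : sbar F q (p ω) ≤ t k := by
        have hlt : k < n₀ := by rw [hk]; exact Nat.lt_succ_self k
        exact not_lt.1 (Nat.find_min hex hlt)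
      have hgk1 : t (k+1) < sbar F q (p ω) := by
        rw [hk] at hn₀spec
        exact hn₀spec
      have hωE : ω ∈ E k := by
        refine ⟨⟨hgk, hpj.trans hgk⟩, ?_⟩
        rintro ⟨hg1, -⟩
        exact absurd hg1 (not_le.2 hgk1)
      calc ENNReal.ofReal (sbar F q (p ω))⁻¹
          = (ENNReal.ofReal (sbar F q (p ω)))⁻¹ := ENNReal.ofReal_inv_of_pos hgpos
      _ ≤ (ENNReal.ofReal (t (k+1)))⁻¹ :=
          ENNReal.inv_le_inv.2 (ENNReal.ofReal_le_ofReal hgk1.le)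
      _ = Set.indicator (E k) (fun _ => (ENNReal.ofReal (t (k+1)))⁻¹) ω :=
          (Set.indicator_of_mem hωE (fun _ => (ENNReal.ofReal (t (k+1)))⁻¹)).symm
      _ ≤ ∑' k, Set.indicator (E k) (fun _ => (ENNReal.ofReal (t (k+1)))⁻¹) ω :=
          ENNReal.le_tsum k
    · rw [if_neg hcond]
      simp
  calc I ≤ ∫⁻ ω, ∑' k, Set.indicator (E k) (fun _ => (ENNReal.ofReal (t (k+1)))⁻¹) ω ∂μ :=
        lintegral_mono hpt
  _ = ∑' k, ∫⁻ ω, Set.indicator (E k) (fun _ => (ENNReal.ofReal (t (k+1)))⁻¹) ω ∂μ :=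
        lintegral_tsum fun k => (measurable_const.indicator (hEmeas k)).aemeasurable
  _ = ∑' k, (ENNReal.ofReal (t (k+1)))⁻¹ * μ (E k) := by
        refine tsum_congr fun k => ?_
        rw [lintegral_indicator_const (hEmeas k)]
  _ ≤ ∑' k, (ENNReal.ofReal r)⁻¹ * (c k - c (k+1)) := ENNReal.tsum_le_tsum hterm
  _ = (ENNReal.ofReal r)⁻¹ * ∑' k, (c k - c (k+1)) := ENNReal.tsum_mul_left
  _ ≤ (ENNReal.ofReal r)⁻¹ * 1 := mul_le_mul_right htel _
  _ = (ENNReal.ofReal r)⁻¹ := mul_one _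

end Key

end FBH

/-- **Focused BH under positive dependence (Theorem 1(i)).**
If the null p-values are superuniform, the p-value vector is PRDS on `H0`, and the filter is
monotonic, then Focused BH at level `q` controls the generalized FDR:
`E[FDP(U*)] ≤ q` where `U* = F(R(t*,p), p)`. -/
theorem focusedBH_FDR_control_of_PRDS_of_monotonic
    {Ω : Type*} [MeasurableSpace Ω] (μ : Measure Ω) [IsProbabilityMeasure μ]
    {m : ℕ} (H0 : Finset (Fin m)) (p : Ω → Fin m → ℝ)
    (hpmeas : Measurable p)
    (hp01 : ∀ ω i, p ω i ∈ Set.Icc (0 : ℝ) 1)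
    (hsuper : Superuniform μ p H0)
    (hPRDS : PRDSOn μ p H0)
    (F : Finset (Fin m) → (Fin m → ℝ) → (Fin m → ℝ))
    (hF : IsFilter F)
    (hFmeas : ∀ (R : Finset (Fin m)) (j : Fin m), Measurable (fun x : Fin m → ℝ => F R x j))
    (hmono : MonotonicFilter F)
    (q : ℝ) (hq : q ∈ Set.Ioo (0 : ℝ) 1) :
    ∫ ω, genFDP H0 (F (Rset (tstar F q (p ω)) (p ω)) (p ω)) ∂μ ≤ q := by
  classical
  rcases Nat.eq_zero_or_pos m with hm0 | hm
  · subst hm0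
    have hzero : ∀ ω, genFDP H0 (F (Rset (tstar F q (p ω)) (p ω)) (p ω)) = 0 := by
      intro ω
      simp [genFDP]
    simp only [hzero, integral_zero]
    exact hq.1.le
  · have hm' : (0:ℝ) < m := by exact_mod_cast hm
    set φ : (Fin m → ℝ) → ℝ := fun x => genFDP H0 (F (Rset (tstar F q x) x) x) with hφdef
    have hφmeas : Measurable φ := by
      refine FBH.measurable_selector _ (FBH.measurable_tstar hq.1.le hFmeas)
        (fun R x => genFDP H0 (F R x)) (fun R => ?_)
      show Measurable fun x => (∑ j ∈ H0, F R x j) / (∑ j, F R x j)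
      exact (Finset.measurable_sum _ fun j _ => hFmeas R j).div
        (Finset.measurable_sum _ fun j _ => hFmeas R j)
    have hφnn : ∀ x, 0 ≤ φ x := fun x => div_nonneg
      (Finset.sum_nonneg fun j _ => (hF _ _ j).2.1)
      (Finset.sum_nonneg fun j _ => (hF _ _ j).2.1)
    set b : Fin m → (Fin m → ℝ) → ℝ := fun j x =>
      if x j ≤ FBH.sbar F q x ∧ 0 < FBH.sbar F q x then (FBH.sbar F q x)⁻¹ else 0 with hbdef
    have hbnn : ∀ j x, 0 ≤ b j x := by
      intro j x
      rw [hbdef]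
      dsimp only
      split
      · next h => exact inv_nonneg.2 h.2.le
      · exact le_rfl
    have hsbarmeas : Measurable (FBH.sbar F q (m := m)) :=
      FBH.measurable_sbar hF hmono hq.1.le hFmeas
    have hbmeas : ∀ j : Fin m, Measurable (b j) := by
      intro j
      refine Measurable.ite ?_ hsbarmeas.inv measurable_const
      exact (measurableSet_le (measurable_pi_apply j) hsbarmeas).inter
        (measurableSet_lt measurable_const hsbarmeas)
    have haenull : ∀ᵐ ω ∂μ, ∀ j ∈ H0, 0 < p ω j := by
      rw [ae_iff]
      have hnull0 : ∀ j ∈ H0, μ {ω | p ω j ≤ 0} = 0 := fun j hj =>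
        le_antisymm (by simpa using hsuper j hj 0 ⟨le_rfl, zero_le_one⟩) zero_le
      refine measure_mono_null ?_
        ((measure_biUnion_null_iff H0.countable_toSet).2 fun j hj => hnull0 j hj)
      intro ω hω
      simp only [Set.mem_setOf_eq, not_forall, not_lt] at hω
      obtain ⟨j, hj, hle⟩ := hω
      exact Set.mem_biUnion hj hle
    have hae : ∀ᵐ ω ∂μ, ENNReal.ofReal (φ (p ω))
        ≤ ENNReal.ofReal (q / m) * ∑ j ∈ H0, ENNReal.ofReal (b j (p ω)) := by
      filter_upwards [haenull] with ω hω
      have hb := FBH.pointwise_bound hF hmono hm hq.1 H0 (p ω) (hp01 ω) hω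
      calc ENNReal.ofReal (φ (p ω))
          ≤ ENNReal.ofReal ((q / m) * ∑ j ∈ H0, b j (p ω)) := ENNReal.ofReal_le_ofReal hb
      _ = ENNReal.ofReal (q / m) * ENNReal.ofReal (∑ j ∈ H0, b j (p ω)) :=
          ENNReal.ofReal_mul (div_nonneg hq.1.le hm'.le)
      _ = ENNReal.ofReal (q / m) * ∑ j ∈ H0, ENNReal.ofReal (b j (p ω)) := by
          rw [ENNReal.ofReal_sum_of_nonneg fun j _ => hbnn j _]
    have hkey : ∀ j ∈ H0, ∫⁻ ω, ENNReal.ofReal (b j (p ω)) ∂μ ≤ 1 := fun j hj =>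
      FBH.key_lemma μ H0 p hpmeas hsuper hPRDS F hF hFmeas hmono hm q hq j hj
    have hcard : ((H0.card : ENNReal)) ≤ (m : ENNReal) := by
      refine Nat.cast_le.2 ?_
      calc H0.card ≤ Finset.univ.card := Finset.card_le_univ H0
      _ = m := by simp
    have hlin : ∫⁻ ω, ENNReal.ofReal (φ (p ω)) ∂μ ≤ ENNReal.ofReal q := by
      calc ∫⁻ ω, ENNReal.ofReal (φ (p ω)) ∂μ
          ≤ ∫⁻ ω, ENNReal.ofReal (q / m) * ∑ j ∈ H0, ENNReal.ofReal (b j (p ω)) ∂μ :=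
            lintegral_mono_ae hae
      _ = ENNReal.ofReal (q / m) * ∫⁻ ω, ∑ j ∈ H0, ENNReal.ofReal (b j (p ω)) ∂μ :=
            lintegral_const_mul' _ _ ENNReal.ofReal_ne_top
      _ = ENNReal.ofReal (q / m) * ∑ j ∈ H0, ∫⁻ ω, ENNReal.ofReal (b j (p ω)) ∂μ := by
            congr 1
            refine lintegral_finset_sum _ fun j _ => ?_
            exact ((hbmeas j).comp hpmeas).ennreal_ofReal
      _ ≤ ENNReal.ofReal (q / m) * ∑ j ∈ H0, 1 :=
            mul_le_mul_right (Finset.sum_le_sum hkey) _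
      _ = ENNReal.ofReal (q / m) * (H0.card : ENNReal) := by simp
      _ ≤ ENNReal.ofReal (q / m) * (m : ENNReal) := mul_le_mul_right hcard _
      _ = ENNReal.ofReal q := by
            rw [← ENNReal.ofReal_natCast m, ← ENNReal.ofReal_mul (div_nonneg hq.1.le hm'.le),
              div_mul_cancel₀ q (ne_of_gt hm')]
    have hint : ∫ ω, φ (p ω) ∂μ = (∫⁻ ω, ENNReal.ofReal (φ (p ω)) ∂μ).toReal :=
      integral_eq_lintegral_of_nonneg_ae (ae_of_all _ fun ω => hφnn (p ω))
        (hφmeas.comp hpmeas).aestronglyMeasurable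
    show ∫ ω, φ (p ω) ∂μ ≤ q
    rw [hint]
    calc (∫⁻ ω, ENNReal.ofReal (φ (p ω)) ∂μ).toReal
        ≤ (ENNReal.ofReal q).toReal := ENNReal.toReal_mono ENNReal.ofReal_ne_top hlin
    _ = q := ENNReal.toReal_ofReal hq.1.le
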